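/- Let X be a copositive matrix and let τ(j), j ∈ J(s), be zeros of X with pairwise τ(i)ᵀXτ(j) = 0. Set P* = ⋃_{j∈J(s)} supp(τ(j)). Then the principal submatrix X(P*) is positive semidefinite. -/

import Mathlib

open Matrix BigOperators

def Copositive {p : ℕ} (X : Matrix (Fin p) (Fin p) ℝ) : Prop :=
  ∀ t : Fin p → ℝ, (∀ k, 0 ≤ t k) → 0 ≤ t ⬝ᵥ X.mulVec t

def IsZeroOf {p : ℕ} (X : Matrix (Fin p) (Fin p) ℝ) (τ : Fin p → ℝ) : Prop :=
  (∀ k, 0 ≤ τ k) ∧ τ ≠ 0 ∧ τ ⬝ᵥ X.mulVec τ = 0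

def principalSub {p : ℕ} (X : Matrix (Fin p) (Fin p) ℝ) (Q : Finset (Fin p)) :
    Matrix {k // k ∈ Q} {k // k ∈ Q} ℝ :=
  X.submatrix (fun i => (i : Fin p)) (fun j => (j : Fin p))

/-- If `X` is copositive, `σ ≥ 0` has zero quadratic form, and `y` is supported where `σ > 0`,
then the quadratic form at `y` is nonnegative. -/
lemma key_quad {p : ℕ} (X : Matrix (Fin p) (Fin p) ℝ) (hcop : Copositive X)
    (σ y : Fin p → ℝ) (hσ0 : ∀ k, 0 ≤ σ k) (hσq : σ ⬝ᵥ X.mulVec σ = 0)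
    (hsupp : ∀ k, y k ≠ 0 → 0 < σ k) : 0 ≤ y ⬝ᵥ X.mulVec y := by
  by_cases hy : ∀ k, y k = 0
  · have : y = 0 := funext hy
    simp [this]
  · push_neg at hy
    set S : Finset (Fin p) := Finset.univ.filter (fun k => y k ≠ 0) with hS
    have hSne : S.Nonempty := by
      obtain ⟨k, hk⟩ := hy
      exact ⟨k, by simp [hS, hk]⟩
    set δ : ℝ := S.inf' hSne (fun k => σ k / |y k|) with hδ
    have hδpos : 0 < δ := by
      rw [hδ, Finset.lt_inf'_iff]
      intro k hk
      have hk' : y k ≠ 0 := by simpa [hS] using hk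
      exact div_pos (hsupp k hk') (abs_pos.mpr hk')
    have hbound : ∀ k, δ * |y k| ≤ σ k := by
      intro k
      by_cases h : y k = 0
      · simp [h, hσ0 k]
      · have h1 : δ ≤ σ k / |y k| :=
          Finset.inf'_le _ (by simp [hS, h])
        have h2 : 0 < |y k| := abs_pos.mpr h
        calc δ * |y k| ≤ (σ k / |y k|) * |y k| := by nlinarith
          _ = σ k := by field_simp
    have hplus : ∀ k, 0 ≤ σ k + δ * y k := by
      intro k
      have := hbound k
      cases abs_cases (y k) with
      | inl h => nlinarith [h.1]
      | inr h => nlinarith [h.1]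
    have hminus : ∀ k, 0 ≤ σ k - δ * y k := by
      intro k
      have := hbound k
      cases abs_cases (y k) with
      | inl h => nlinarith [h.1]
      | inr h => nlinarith [h.1]
    have e1 : 0 ≤ (σ + δ • y) ⬝ᵥ X.mulVec (σ + δ • y) := hcop _ (fun k => hplus k)
    have e2 : 0 ≤ (σ - δ • y) ⬝ᵥ X.mulVec (σ - δ • y) := hcop _ (fun k => hminus k)
    have exp1 : (σ + δ • y) ⬝ᵥ X.mulVec (σ + δ • y)
        = σ ⬝ᵥ X.mulVec σ + δ * (σ ⬝ᵥ X.mulVec y) + δ * (y ⬝ᵥ X.mulVec σ)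
          + δ * (δ * (y ⬝ᵥ X.mulVec y)) := by
      simp [Matrix.mulVec_add, Matrix.mulVec_smul, dotProduct_add, add_dotProduct,
        dotProduct_smul, smul_dotProduct, smul_eq_mul]
      ring
    have exp2 : (σ - δ • y) ⬝ᵥ X.mulVec (σ - δ • y)
        = σ ⬝ᵥ X.mulVec σ - δ * (σ ⬝ᵥ X.mulVec y) - δ * (y ⬝ᵥ X.mulVec σ)
          + δ * (δ * (y ⬝ᵥ X.mulVec y)) := by
      simp [Matrix.mulVec_sub, Matrix.mulVec_smul, dotProduct_sub, sub_dotProduct,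
        dotProduct_smul, smul_dotProduct, smul_eq_mul]
      ring
    rw [exp1, hσq] at e1
    rw [exp2, hσq] at e2
    nlinarith [e1, e2, mul_pos hδpos hδpos]

theorem principalSub_union_supports_posSemidef {p : ℕ} {ι : Type*} [Fintype ι] [Nonempty ι]
    (X : Matrix (Fin p) (Fin p) ℝ) (hX : X.IsSymm) (hcop : Copositive X)
    (τ : ι → Fin p → ℝ) (hτ : ∀ j, IsZeroOf X (τ j))
    (horth : ∀ i j, τ i ⬝ᵥ X.mulVec (τ j) = 0)
    (Pstar : Finset (Fin p)) (hP : ∀ k, k ∈ Pstar ↔ ∃ j, 0 < τ j k) :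
    (principalSub X Pstar).PosSemidef := by
  set σ : Fin p → ℝ := ∑ j, τ j with hσdef
  have hσ0 : ∀ k, 0 ≤ σ k := by
    intro k
    rw [hσdef]
    simp only [Finset.sum_apply]
    exact Finset.sum_nonneg fun j _ => (hτ j).1 k
  have hσq : σ ⬝ᵥ X.mulVec σ = 0 := by
    rw [hσdef]
    have h1 : X.mulVec (∑ j, τ j) = ∑ j, X.mulVec (τ j) :=
      map_sum (Matrix.mulVecLin X) _ _
    have h2 : ∀ (v : Fin p → ℝ) (f : ι → Fin p → ℝ), v ⬝ᵥ (∑ j, f j) = ∑ j, v ⬝ᵥ f j := by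
      intro v f
      simp only [dotProduct, Finset.sum_apply, Finset.mul_sum]
      exact Finset.sum_comm
    have h3 : ∀ (v : Fin p → ℝ) (f : ι → Fin p → ℝ), (∑ j, f j) ⬝ᵥ v = ∑ j, f j ⬝ᵥ v := by
      intro v f
      simp only [dotProduct, Finset.sum_apply, Finset.sum_mul]
      exact Finset.sum_comm
    rw [h1, h2]
    rw [Finset.sum_congr rfl (fun j _ => h3 _ _)]
    simp [horth]
  have hσpos : ∀ k, k ∈ Pstar → 0 < σ k := by
    intro k hk
    obtain ⟨j, hj⟩ := (hP k).1 hk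
    rw [hσdef]
    simp only [Finset.sum_apply]
    have : ∀ i ∈ Finset.univ, 0 ≤ τ i k := fun i _ => (hτ i).1 k
    exact lt_of_lt_of_le hj (Finset.single_le_sum this (Finset.mem_univ j))
  rw [Matrix.posSemidef_iff_dotProduct_mulVec]
  constructor
  · -- IsHermitian
    ext i j
    simp only [principalSub, conjTranspose_apply, submatrix_apply, star, RCLike.star_def]
    exact congrFun (congrFun hX _) _
  · intro x
    set y : Fin p → ℝ := fun k => if h : k ∈ Pstar then x ⟨k, h⟩ else 0 with hy
    have hsupp : ∀ k, y k ≠ 0 → 0 < σ k := by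
      intro k hk
      by_cases h : k ∈ Pstar
      · exact hσpos k h
      · exfalso; apply hk; simp [hy, h]
    have hkey := key_quad X hcop σ y hσ0 hσq hsupp
    have heq : y ⬝ᵥ X.mulVec y = x ⬝ᵥ (principalSub X Pstar).mulVec x := by
      have hy0 : ∀ k, k ∉ Pstar → y k = 0 := fun k hk => by simp [hy, hk]
      have L : y ⬝ᵥ X.mulVec y = ∑ k, ∑ l, y k * (X k l * y l) := by
        simp [dotProduct, Matrix.mulVec, Finset.mul_sum]
      have R : x ⬝ᵥ (principalSub X Pstar).mulVec x
          = ∑ i : {k // k ∈ Pstar}, ∑ j : {k // k ∈ Pstar}, x i * (X i j * x j) := by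
        simp [dotProduct, Matrix.mulVec, principalSub, Finset.mul_sum]
      rw [L, R]
      have inner : ∀ k : Fin p, ∑ l, y k * (X k l * y l)
          = ∑ l ∈ Pstar, y k * (X k l * y l) := by
        intro k
        refine (Finset.sum_subset (Finset.subset_univ _) ?_).symm
        intro l _ hl
        simp [hy0 l hl]
      calc ∑ k, ∑ l, y k * (X k l * y l)
          = ∑ k ∈ Pstar, ∑ l ∈ Pstar, y k * (X k l * y l) := by
            rw [← Finset.sum_subset (Finset.subset_univ Pstar)
              (fun k _ hk => by simp [hy0 k hk])]
            exact Finset.sum_congr rfl fun k _ => inner k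
        _ = ∑ i : {k // k ∈ Pstar}, ∑ j : {k // k ∈ Pstar}, y i * (X i j * y j) := by
            rw [← Finset.sum_coe_sort]
            exact Finset.sum_congr rfl fun i _ => (Finset.sum_coe_sort _ _).symm
        _ = ∑ i : {k // k ∈ Pstar}, ∑ j : {k // k ∈ Pstar}, x i * (X i j * x j) := by
            refine Finset.sum_congr rfl fun i _ => Finset.sum_congr rfl fun j _ => ?_
            simp [hy]
    simpa [star, heq] using hkey
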